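/- Let P(q) = Σ_{n=0}^m qⁿ aₙ be a nonconstant quaternionic polynomial with all aₙ real. Then every zero of the derivative P'(q) = Σ_{n=1}^m q^{n-1} n aₙ belongs to the convex hull (in ℍ ≅ ℝ⁴) of the zero set of P. -/

import Mathlib

open Quaternion Polynomial

/-- Evaluation of a quaternionic polynomial with coefficients written on the right. -/
noncomputable def qeval (P : Polynomial ℍ[ℝ]) (q : ℍ[ℝ]) : ℍ[ℝ] :=
  P.sum fun n a => q ^ n * a

lemma gaussLucasC (g : ℂ[X]) (hg : 0 < g.natDegree) (z : ℂ)
    (hz : eval z (derivative g) = 0) : z ∈ convexHull ℝ {w : ℂ | w ∈ g.roots} := by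
  classical
  have hg0 : g ≠ 0 := fun h => by simp [h] at hg
  by_cases hzg : eval z g = 0
  · exact subset_convexHull ℝ _ (by simp [Set.mem_setOf_eq, mem_roots hg0, IsRoot, hzg])
  set s := g.roots with hs
  have hcard : s.card = g.natDegree :=
    (splits_iff_card_roots.mp (IsAlgClosed.splits g))
  have hsne : s ≠ 0 := by
    intro h; rw [h] at hcard; simp at hcard; omega
  have hfac : C g.leadingCoeff * (s.map fun a => X - C a).prod = g :=
    C_leadingCoeff_mul_prod_multiset_X_sub_C hcard
  have hlc : g.leadingCoeff ≠ 0 := leadingCoeff_ne_zero.mpr hg0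
  have hzr : ∀ a ∈ s, z - a ≠ 0 := by
    intro a ha h0
    apply hzg
    have hza : z = a := sub_eq_zero.mp h0
    have : IsRoot g a := (mem_roots hg0).mp ha
    rw [hza]; exact this
  have hT : eval z g = g.leadingCoeff * (s.map fun a => (z - a)).prod := by
    conv_lhs => rw [← hfac]
    rw [eval_mul, eval_C, eval_multiset_prod, Multiset.map_map]
    simp [Function.comp]
  have hTne : (s.map fun a => (z - a)).prod ≠ 0 := by
    apply Multiset.prod_ne_zero
    intro h0
    obtain ⟨a, ha, ha0⟩ := Multiset.mem_map.mp h0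
    exact hzr a ha ha0
  have hder : eval z (derivative g)
      = g.leadingCoeff * (s.map fun r => ((s.erase r).map fun a => (z - a)).prod).sum := by
    conv_lhs => rw [← hfac]
    rw [derivative_mul, derivative_C, zero_mul, zero_add, eval_mul, eval_C, derivative_prod]
    congr 1
    rw [show (eval z : ℂ[X] → ℂ) = ⇑(evalRingHom z) from rfl, map_multiset_sum, Multiset.map_map]
    congr 1
    apply Multiset.map_congr rfl
    intro r hr
    simp [eval_multiset_prod, Multiset.map_map, Function.comp]
  have key : (s.map fun r => (z - r)⁻¹).sum = 0 := by
    have h1 : (s.map fun r => ((s.erase r).map fun a => (z - a)).prod)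
        = s.map fun r => (z - r)⁻¹ * (s.map fun a => (z - a)).prod := by
      apply Multiset.map_congr rfl
      intro r hr
      have : (s.map fun a => (z - a)).prod
          = (z - r) * ((s.erase r).map fun a => (z - a)).prod := by
        conv_lhs => rw [← Multiset.cons_erase hr]
        rw [Multiset.map_cons, Multiset.prod_cons]
      rw [this, inv_mul_cancel_left₀ (hzr r hr)]
    rw [hder, h1, Multiset.sum_map_mul_right] at hz
    rcases mul_eq_zero.mp hz with h | h
    · exact absurd h hlc
    · rcases mul_eq_zero.mp h with h | h
      · exact h
      · exact absurd h hTne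
  have key2 : (s.map fun r => (Complex.normSq (z - r))⁻¹ • (z - r)).sum = 0 := by
    have hc := congrArg (starRingEnd ℂ) key
    rw [map_multiset_sum, Multiset.map_map, map_zero] at hc
    rw [← hc]
    apply congrArg
    apply Multiset.map_congr rfl
    intro r hr
    rw [Function.comp_apply, map_inv₀, Complex.inv_def, Complex.conj_conj, Complex.normSq_conj,
      Complex.real_smul, Complex.ofReal_inv, mul_comm]
  set t := s.toFinset with ht
  set w : ℂ → ℝ := fun a => (s.count a : ℝ) * (Complex.normSq (z - a))⁻¹ with hw
  have hsum : ∑ a ∈ t, w a • (z - a) = 0 := by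
    rw [← key2, Finset.sum_multiset_map_count]
    apply Finset.sum_congr rfl
    intro a _
    rw [hw, ← Nat.cast_smul_eq_nsmul ℝ, smul_smul]
  have hw0 : ∀ a ∈ t, 0 ≤ w a := fun a _ =>
    mul_nonneg (Nat.cast_nonneg _) (inv_nonneg.mpr (Complex.normSq_nonneg _))
  obtain ⟨a0, ha0⟩ := Multiset.exists_mem_of_ne_zero hsne
  have hwpos : 0 < ∑ a ∈ t, w a := by
    apply Finset.sum_pos' hw0
    refine ⟨a0, Multiset.mem_toFinset.mpr ha0, ?_⟩
    apply mul_pos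
    · exact_mod_cast Multiset.count_pos.mpr ha0
    · exact inv_pos.mpr (by
        have := hzr a0 ha0
        simpa [Complex.normSq_pos] using this)
  have hzc : (∑ a ∈ t, w a) • z = ∑ a ∈ t, w a • a := by
    have h2 : ∑ a ∈ t, (w a • z - w a • a) = 0 := by
      simpa [smul_sub] using hsum
    rw [Finset.sum_sub_distrib] at h2
    rw [Finset.sum_smul]
    exact sub_eq_zero.mp h2
  have hzcm : z = t.centerMass w id := by
    rw [Finset.centerMass]; simp only [id_eq]; rw [← hzc, inv_smul_smul₀ (ne_of_gt hwpos)]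
  rw [hzcm]
  exact Finset.centerMass_mem_convexHull t hw0 hwpos
    (fun a ha => Multiset.mem_toFinset.mp ha)

lemma halg_inj : Function.Injective (algebraMap ℝ ℍ[ℝ]) :=
  (algebraMap ℝ ℍ[ℝ]).injective

lemma qeval_map (p : ℝ[X]) (q : ℍ[ℝ]) :
    qeval (p.map (algebraMap ℝ ℍ[ℝ])) q = aeval q p := by
  rw [qeval, Polynomial.sum_def, aeval_def, eval₂_eq_sum, Polynomial.sum_def,
    support_map_of_injective p halg_inj]
  apply Finset.sum_congr rfl
  intro n _
  rw [coeff_map]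
  exact (Algebra.commutes (p.coeff n) (q ^ n)).symm

lemma liftAux_inj (u : ℍ[ℝ]) (hu : u * u = -1) :
    Function.Injective (Complex.liftAux u hu) :=
  (Complex.liftAux u hu).toRingHom.injective

lemma aux (p : ℝ[X]) (hdeg : 0 < p.natDegree) (u : ℍ[ℝ]) (hu : u * u = -1) (z : ℂ)
    (hz : aeval (Complex.liftAux u hu z) (derivative p) = 0) :
    Complex.liftAux u hu z ∈ convexHull ℝ {w : ℍ[ℝ] | aeval w p = 0} := by
  set φ := Complex.liftAux u hu with hφ
  set g : ℂ[X] := p.map (algebraMap ℝ ℂ) with hg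
  have hgdeg : 0 < g.natDegree := by
    rwa [hg, natDegree_map_eq_of_injective (algebraMap ℝ ℂ).injective]
  have hzg : eval z (derivative g) = 0 := by
    have h1 : φ (aeval z (derivative p)) = 0 := by
      rw [← aeval_algHom_apply]; exact hz
    have h2 : aeval z (derivative p) = 0 := by
      apply liftAux_inj u hu
      rw [h1, map_zero]
    rw [hg, derivative_map, eval_map, ← aeval_def]
    exact h2
  have hmem := gaussLucasC g hgdeg z hzg
  have himg : φ '' {w : ℂ | w ∈ g.roots} ⊆ {w : ℍ[ℝ] | aeval w p = 0} := by
    rintro _ ⟨w, hw, rfl⟩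
    have hg0 : g ≠ 0 := fun h => by simp [h] at hgdeg
    have hroot : aeval w p = 0 := by
      have := (mem_roots hg0).mp hw
      rwa [IsRoot, hg, eval_map, ← aeval_def] at this
    show aeval (φ w) p = 0
    rw [aeval_algHom_apply, hroot, map_zero]
  have : φ z ∈ φ '' convexHull ℝ {w : ℂ | w ∈ g.roots} := Set.mem_image_of_mem _ hmem
  rw [show (⇑φ : ℂ → ℍ[ℝ]) = ⇑φ.toLinearMap from rfl, φ.toLinearMap.image_convexHull] at this
  exact convexHull_mono himg this

theorem gauss_lucas_stmt12 (P : Polynomial ℍ[ℝ]) (hreal : ∀ n, (P.coeff n).im = 0)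
    (hnc : 0 < P.natDegree) (q : ℍ[ℝ]) (h : qeval (derivative P) q = 0) :
    q ∈ convexHull ℝ {z : ℍ[ℝ] | qeval P z = 0} := by
  obtain ⟨p, hp⟩ : ∃ p : ℝ[X], p.map (algebraMap ℝ ℍ[ℝ]) = P := by
    rw [← Polynomial.mem_lifts]
    rw [Polynomial.lifts_iff_coeff_lifts]
    intro n
    refine ⟨(P.coeff n).re, ?_⟩
    rw [Quaternion.algebraMap_def]
    have := (P.coeff n).re_add_im
    rwa [hreal n, add_zero] at this
  subst hp
  have hdeg : 0 < p.natDegree := by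
    rwa [natDegree_map_eq_of_injective halg_inj] at hnc
  have hset : {z : ℍ[ℝ] | qeval (p.map (algebraMap ℝ ℍ[ℝ])) z = 0} = {w : ℍ[ℝ] | aeval w p = 0} := by
    ext w; simp [qeval_map]
  have hd : aeval q (derivative p) = 0 := by
    rw [derivative_map] at h
    rwa [qeval_map] at h
  rw [hset]
  by_cases hv : q.im = 0
  · have hq : q = Complex.liftAux ⟨0, 1, 0, 0⟩ (by show (⟨0, 1, 0, 0⟩ : ℍ[ℝ]) * ⟨0, 1, 0, 0⟩ = -1; ext <;> simp [QuaternionAlgebra.mk_mul_mk]) ((q.re : ℝ) : ℂ) := by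
      rw [show ((q.re : ℝ) : ℂ) = algebraMap ℝ ℂ q.re from rfl, AlgHom.commutes,
        Quaternion.algebraMap_def]
      conv_lhs => rw [← q.re_add_im, hv, add_zero]
    rw [hq] at hd ⊢
    exact aux p hdeg _ _ _ hd
  · set v := q.im with hvdef
    set n := Real.sqrt (normSq v) with hn
    have hnsq : 0 < normSq v := lt_of_le_of_ne normSq_nonneg (Ne.symm (normSq_ne_zero.mpr hv))
    have hn0 : n ≠ 0 := ne_of_gt (Real.sqrt_pos.mpr hnsq)
    have hnn : n * n = normSq v := Real.mul_self_sqrt hnsq.le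
    set u := n⁻¹ • v with hu
    have huu : u * u = -1 := by
      rw [hu, smul_mul_smul_comm]
      have hvv : v * v = -((normSq v : ℝ) : ℍ[ℝ]) := by
        have := q.im_sq
        rwa [sq] at this
      rw [hvv, smul_neg, ← Quaternion.coe_smul, smul_eq_mul]
      have h1 : n⁻¹ * n⁻¹ * normSq v = 1 := by
        rw [← hnn]; field_simp
      rw [h1, Quaternion.coe_one]
    have hq : q = Complex.liftAux u huu ⟨q.re, n⟩ := by
      rw [Complex.liftAux_apply]
      show q = algebraMap ℝ ℍ[ℝ] q.re + n • u
      rw [hu, smul_smul, mul_inv_cancel₀ hn0, one_smul, Quaternion.algebraMap_def]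
      exact (q.re_add_im).symm
    rw [hq] at hd ⊢
    exact aux p hdeg _ _ _ hd
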